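/- Let Ω be a nonempty compact subset of ℝ^n (n ≥ 2). Then the minimal unfolded region of Ω is included in the convex hull of Ω: Uf(Ω) ⊆ conv(Ω). -/

import Mathlib

open scoped RealInnerProductSpace

/-- Reflection in the hyperplane `{x : x·v = b}` (for a unit vector `v`). -/
noncomputable def reflHyp {n : ℕ} (v : EuclideanSpace ℝ (Fin n)) (b : ℝ)
    (x : EuclideanSpace ℝ (Fin n)) : EuclideanSpace ℝ (Fin n) :=
  x - (2 * (⟪x, v⟫ - b)) • v

/-- The open cap of `X` above the hyperplane `{x : x·v = b}`. -/
def cap {n : ℕ} (X : Set (EuclideanSpace ℝ (Fin n))) (v : EuclideanSpace ℝ (Fin n)) (b : ℝ) :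
    Set (EuclideanSpace ℝ (Fin n)) :=
  X ∩ {x | b < ⟪x, v⟫}

/-- The level of the maximal cap of `X` in direction `v`. -/
noncomputable def level {n : ℕ} (X : Set (EuclideanSpace ℝ (Fin n)))
    (v : EuclideanSpace ℝ (Fin n)) : ℝ :=
  sInf {a : ℝ | ∀ b : ℝ, a ≤ b → reflHyp v b '' cap X v b ⊆ X}

/-- The minimal unfolded region (heart) of `X`. -/
noncomputable def Uf {n : ℕ} (X : Set (EuclideanSpace ℝ (Fin n))) :
    Set (EuclideanSpace ℝ (Fin n)) :=
  ⋂ v ∈ {v : EuclideanSpace ℝ (Fin n) | ‖v‖ = 1}, {x | ⟪x, v⟫ ≤ level X v}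

/-- The δ-parallel body of `Ω`: the union of closed δ-balls centered in `Ω`. -/
def parallelBody {n : ℕ} (Ω : Set (EuclideanSpace ℝ (Fin n))) (δ : ℝ) :
    Set (EuclideanSpace ℝ (Fin n)) :=
  ⋃ x ∈ Ω, Metric.closedBall x δ

/-- In finite dimension, the convex hull of a nonempty compact set is compact. -/
lemma isCompact_convexHull_aux {n : ℕ} {Ω : Set (EuclideanSpace ℝ (Fin n))}
    (hΩne : Ω.Nonempty) (hΩ : IsCompact Ω) : IsCompact (convexHull ℝ Ω) := by
  classical
  obtain ⟨x0, hx0⟩ := hΩne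
  set d := n + 1 with hd
  set φ : (Fin d → ℝ) × (Fin d → EuclideanSpace ℝ (Fin n)) → EuclideanSpace ℝ (Fin n) :=
    fun q => ∑ i, q.1 i • q.2 i with hφ
  have hφc : Continuous φ := by
    apply continuous_finset_sum
    intro i _
    exact ((continuous_apply i).comp continuous_fst).smul
      ((continuous_apply i).comp continuous_snd)
  set K := (stdSimplex ℝ (Fin d)) ×ˢ (Set.univ.pi fun _ : Fin d => Ω) with hK
  have hKc : IsCompact K := (isCompact_stdSimplex (𝕜 := ℝ) (ι := Fin d)).prod (isCompact_univ_pi fun _ => hΩ)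
  have himg : convexHull ℝ Ω = φ '' K := by
    apply Set.Subset.antisymm
    · intro x hx
      obtain ⟨ι, hι, z, w, hzr, hai, hwpos, hwsum, hsum⟩ :=
        eq_pos_convex_span_of_mem_convexHull hx
      have hcard : Fintype.card ι ≤ d := by
        have h1 := hai.card_le_finrank_succ
        have h2 : Module.finrank ℝ ↥(vectorSpan ℝ (Set.range z)) ≤ n := by
          have h3 := Submodule.finrank_le (vectorSpan ℝ (Set.range z))
          simpa [finrank_euclideanSpace_fin] using h3
        omega
      obtain ⟨e⟩ : Nonempty (ι ↪ Fin d) :=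
        Function.Embedding.nonempty_of_card_le (by simpa using hcard)
      set w' : Fin d → ℝ := Function.extend e w 0 with hw'
      set z' : Fin d → EuclideanSpace ℝ (Fin n) :=
        Function.extend e z (fun _ => x0) with hz'
      have hinj : Function.Injective (⇑e) := e.injective
      have hw'nn : ∀ j, 0 ≤ w' j := by
        intro j
        by_cases hj : ∃ i, e i = j
        · obtain ⟨i, rfl⟩ := hj
          rw [hw', hinj.extend_apply]
          exact (hwpos i).le
        · rw [hw', Function.extend_apply' _ _ _ hj]
          rfl
      have hsum_eq : ∀ (M : Type) (_ : AddCommMonoid M) (F : Fin d → M),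
          (∀ j, (¬∃ i, e i = j) → F j = 0) → ∑ j, F j = ∑ i, F (e i) := by
        intro M _ F hF
        have himage : ∑ j ∈ Finset.univ.image (⇑e), F j = ∑ i, F (e i) :=
          Finset.sum_image (fun i _ j _ h => hinj h)
        rw [← himage]
        refine (Finset.sum_subset (Finset.subset_univ _) ?_).symm
        intro j _ hj
        apply hF
        intro ⟨i, hi⟩
        exact hj (Finset.mem_image.mpr ⟨i, Finset.mem_univ i, hi⟩)
      have hw'sum : ∑ j, w' j = 1 := by
        rw [hsum_eq ℝ _ w' (fun j hj => by
          rw [hw', Function.extend_apply' _ _ _ hj]; rfl)]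
        simp only [hw', hinj.extend_apply]
        exact hwsum
      have hz'mem : ∀ j, z' j ∈ Ω := by
        intro j
        by_cases hj : ∃ i, e i = j
        · obtain ⟨i, rfl⟩ := hj
          rw [hz', hinj.extend_apply]
          exact hzr ⟨i, rfl⟩
        · rw [hz', Function.extend_apply' _ _ _ hj]
          exact hx0
      refine ⟨(w', z'), ⟨⟨hw'nn, hw'sum⟩, fun j _ => hz'mem j⟩, ?_⟩
      show ∑ j, w' j • z' j = x
      rw [hsum_eq _ _ (fun j => w' j • z' j) (fun j hj => by
        have h0 : w' j = 0 := by
          rw [hw', Function.extend_apply' _ _ _ hj]; rfl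
        simp only [h0, zero_smul])]
      simp only [hw', hz', hinj.extend_apply]
      exact hsum
    · rintro x ⟨⟨w, z⟩, ⟨⟨hwnn, hwsum⟩, hz⟩, rfl⟩
      exact mem_convexHull_of_exists_fintype w z hwnn hwsum
        (fun i => hz i (Set.mem_univ i)) rfl
  rw [himg]
  exact hKc.image hφc

theorem stmt10 {n : ℕ} (hn : 2 ≤ n) (Ω : Set (EuclideanSpace ℝ (Fin n)))
    (hΩne : Ω.Nonempty) (hΩ : IsCompact Ω) :
    Uf Ω ⊆ convexHull ℝ Ω := by
  intro p hp
  by_contra hpc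
  have hconv : IsClosed (convexHull ℝ Ω) := (isCompact_convexHull_aux hΩne hΩ).isClosed
  obtain ⟨f, u, hfu, hup⟩ :=
    geometric_hahn_banach_closed_point (convex_convexHull ℝ Ω) hconv hpc
  set w := (InnerProductSpace.toDual ℝ (EuclideanSpace ℝ (Fin n))).symm f with hwdef
  have hfw : ∀ x, f x = ⟪x, w⟫ := fun x => by
    rw [real_inner_comm, hwdef, InnerProductSpace.toDual_symm_apply]
  obtain ⟨x0, hx0⟩ := hΩne
  have hx0c : x0 ∈ convexHull ℝ Ω := subset_convexHull ℝ Ω hx0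
  have hwne : w ≠ 0 := by
    intro h
    have h1 := hfu x0 hx0c
    rw [hfw x0, h, inner_zero_right] at h1
    rw [hfw p, h, inner_zero_right] at hup
    linarith
  have hwpos : (0:ℝ) < ‖w‖ := norm_pos_iff.mpr hwne
  set v : EuclideanSpace ℝ (Fin n) := ‖w‖⁻¹ • w with hvdef
  have hv : ‖v‖ = 1 := by
    rw [hvdef, norm_smul, norm_inv, norm_norm, inv_mul_cancel₀ hwpos.ne']
  have hiv : ∀ x : EuclideanSpace ℝ (Fin n), ⟪x, v⟫ = ⟪x, w⟫ / ‖w‖ := fun x => by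
    rw [hvdef, real_inner_smul_right]; ring
  have hvv : ⟪v, v⟫ = (1:ℝ) := by
    rw [real_inner_self_eq_norm_sq, hv]; norm_num
  -- inner product of a reflected point with v
  have hrefl : ∀ (b : ℝ) (x : EuclideanSpace ℝ (Fin n)),
      ⟪reflHyp v b x, v⟫ = 2 * b - ⟪x, v⟫ := by
    intro b x
    rw [reflHyp, inner_sub_left, real_inner_smul_left, hvv]
    ring
  set S : Set ℝ := {a : ℝ | ∀ b : ℝ, a ≤ b → reflHyp v b '' cap Ω v b ⊆ Ω} with hSdef
  -- lower bound on inner products over Ω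
  have hcont : Continuous fun x : EuclideanSpace ℝ (Fin n) => ⟪x, v⟫ :=
    continuous_id.inner continuous_const
  have himg : IsCompact ((fun x : EuclideanSpace ℝ (Fin n) => ⟪x, v⟫) '' Ω) :=
    hΩ.image hcont
  set m : ℝ := sInf ((fun x : EuclideanSpace ℝ (Fin n) => ⟪x, v⟫) '' Ω) with hmdef
  have hm : ∀ x ∈ Ω, m ≤ ⟪x, v⟫ := fun x hx =>
    csInf_le himg.bddBelow ⟨x, hx, rfl⟩
  -- S is bounded below
  have hSbdd : BddBelow S := by
    refine ⟨(m + ⟪x0, v⟫) / 2, fun a ha => ?_⟩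
    by_contra hlt
    push_neg at hlt
    have hax0 : a < ⟪x0, v⟫ := by
      have := hm x0 hx0
      linarith
    have hmem : x0 ∈ cap Ω v a := ⟨hx0, hax0⟩
    have hin : reflHyp v a x0 ∈ Ω := ha a le_rfl ⟨x0, hmem, rfl⟩
    have := hm _ hin
    rw [hrefl a x0] at this
    linarith
  -- u / ‖w‖ belongs to S
  have hc0 : u / ‖w‖ ∈ S := by
    intro b hb
    rintro y ⟨x, ⟨hxΩ, hxb⟩, rfl⟩
    exfalso
    have h1 : f x < u := hfu x (subset_convexHull ℝ Ω hxΩ)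
    rw [hfw] at h1
    have h2 : ⟪x, v⟫ < u / ‖w‖ := by
      rw [hiv]
      exact div_lt_div_of_pos_right h1 hwpos
    have : b < ⟪x, v⟫ := hxb
    linarith
  have hlev : level Ω v ≤ u / ‖w‖ := csInf_le hSbdd hc0
  have hpmem : ⟪p, v⟫ ≤ level Ω v := by
    have := Set.mem_iInter₂.mp hp v hv
    exact this
  have hpu : u / ‖w‖ < ⟪p, v⟫ := by
    rw [hiv]
    have : u < ⟪p, w⟫ := by rw [← hfw]; exact hup
    exact div_lt_div_of_pos_right this hwpos
  linarith
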